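/- arXiv:2305.02304 — 3 statements merged into one kernel-verified Lean document; each statement's English description precedes it below -/
import Mathlib

section
/- Let K be a symmetric positive definite n×n real matrix, y ∈ {-1,1}^n, and z = K⁻¹y. For each i, let z^{(i)} ∈ ℝ^{n} be the vector supported off coordinate i given by interpolating the leave-one-out data: z^{(i)}_j for j ≠ i solves (K_{\setminus i}) z^{(i)}_{\setminus i} = y_{\setminus i} where K_{\setminus i} is K with the i-th row and column removed. Define η̂_{\setminus i}(x_i) := Σ_{j≠i} z^{(i)}_j K_{ij}. Then z_i y_i > 0 if and only if y_i η̂_{\setminus i}(x_i) < 1. -/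
open Matrix

/-- With `K` symmetric positive definite, `y ∈ {-1,1}ⁿ`, `z = K⁻¹y`, and
`zi` the leave-one-out interpolating coefficient vector (supported off coordinate `i`,
interpolating the labels `y j` for `j ≠ i`), we have `zᵢyᵢ > 0 ↔ yᵢ η̂₋ᵢ(xᵢ) < 1` where
`η̂₋ᵢ(xᵢ) = ∑_{j≠i} zi_j K_{ij} = (K *ᵥ zi) i`. -/
theorem stmt_1 {n : ℕ} (K : Matrix (Fin n) (Fin n) ℝ) (hKsym : K.IsSymm)
    (hKpd : K.PosDef) (y : Fin n → ℝ) (hy : ∀ i, y i = 1 ∨ y i = -1)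
    (z : Fin n → ℝ) (hz : z = K⁻¹ *ᵥ y) (i : Fin n)
    (zi : Fin n → ℝ) (hzi0 : zi i = 0)
    (hzint : ∀ j, j ≠ i → (K *ᵥ zi) j = y j) :
    z i * y i > 0 ↔ y i * (K *ᵥ zi) i < 1 := by
  have hdet : IsUnit K.det := isUnit_iff_ne_zero.mpr (ne_of_gt hKpd.det_pos)
  have hinv : (K⁻¹).PosDef := hKpd.inv
  set c : ℝ := y i - (K *ᵥ zi) i with hc
  set d : ℝ := K⁻¹ i i with hd
  -- d > 0 from positive definiteness of K⁻¹
  have hdpos : 0 < d := by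
    have hne : (Pi.single i 1 : Fin n → ℝ) ≠ 0 := by
      intro h
      have := congrFun h i
      simp at this
    have := hinv.dotProduct_mulVec_pos hne
    simpa [dotProduct, mulVec, Pi.single_apply, Finset.sum_ite_eq', hd] using this
  -- decompose y
  have hy_eq : y = K *ᵥ zi + c • (Pi.single i 1 : Fin n → ℝ) := by
    funext j
    by_cases hj : j = i
    · subst hj; simp [hc]
    · simp [Pi.single_apply, hj, hzint j hj]
  have hzival : K⁻¹ *ᵥ (K *ᵥ zi) = zi := by
    rw [mulVec_mulVec, nonsing_inv_mul K hdet, one_mulVec]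
  have hzi : z i = c * d := by
    rw [hz, hy_eq, mulVec_add, mulVec_smul, hzival]
    simp [hzi0, mulVec, dotProduct, Pi.single_apply, Finset.sum_ite_eq', hd, mul_comm]
  have hyy : y i * y i = 1 := by rcases hy i with h | h <;> rw [h] <;> norm_num
  have key : z i * y i = (1 - y i * (K *ᵥ zi) i) * d := by
    rw [hzi, hc]; ring_nf; nlinarith [hyy]
  rw [key]
  constructor <;> intro h <;> nlinarith
end

section
/- Let A, B be symmetric positive definite n×n matrices with α_L I ⪯ B ⪯ α_U I, and let ᾱ = (α_L + α_U)/2. Then ‖(A + B)⁻¹ (A + ᾱ I)‖_op ≤ (1/2)(α_U/α_L + 1). -/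
open Matrix

open RealInnerProductSpace in
private lemma psd_inner_nonneg {n : ℕ} {M : Matrix (Fin n) (Fin n) ℝ} (hM : M.PosSemidef)
    (x : EuclideanSpace ℝ (Fin n)) :
    0 ≤ ⟪x, Matrix.toEuclideanCLM (𝕜 := ℝ) (n := Fin n) M x⟫ := by
  have h := hM.dotProduct_mulVec_nonneg (WithLp.ofLp x)
  rw [EuclideanSpace.inner_eq_star_dotProduct]
  simpa [Matrix.ofLp_toEuclideanCLM, Matrix.toLin'_apply, dotProduct_comm] using h

open RealInnerProductSpace in
private lemma opNorm_le_of_sq {n : ℕ} {S : Matrix (Fin n) (Fin n) ℝ} (hS : S.IsHermitian)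
    {d : ℝ} (hd : 0 ≤ d)
    (h : (d ^ 2 • (1 : Matrix (Fin n) (Fin n) ℝ) - S * S).PosSemidef) :
    ‖Matrix.toEuclideanCLM (𝕜 := ℝ) (n := Fin n) S‖ ≤ d := by
  refine ContinuousLinearMap.opNorm_le_bound _ hd fun x => ?_
  set T := Matrix.toEuclideanCLM (𝕜 := ℝ) (n := Fin n) S with hT
  have hadj : ContinuousLinearMap.adjoint T = T := by
    rw [← ContinuousLinearMap.star_eq_adjoint, hT, ← map_star]
    exact congrArg _ hS
  have h0 := psd_inner_nonneg h x
  have hmap : Matrix.toEuclideanCLM (𝕜 := ℝ) (n := Fin n)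
      (d ^ 2 • (1 : Matrix (Fin n) (Fin n) ℝ) - S * S) = d ^ 2 • 1 - T * T := by
    rw [_root_.map_sub, _root_.map_smul, _root_.map_one, _root_.map_mul]
  rw [hmap] at h0
  have h1 : ⟪x, (T * T) x⟫ = ⟪T x, T x⟫ := by
    calc ⟪x, (T * T) x⟫ = ⟪x, ContinuousLinearMap.adjoint T (T x)⟫ := by rw [hadj]; rfl
      _ = ⟪T x, T x⟫ := ContinuousLinearMap.adjoint_inner_right T x (T x)
  have h2 : ⟪x, ((d ^ 2 • 1 - T * T : EuclideanSpace ℝ (Fin n) →L[ℝ] EuclideanSpace ℝ (Fin n))) x⟫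
      = d ^ 2 * ‖x‖ ^ 2 - ⟪T x, T x⟫ := by
    rw [ContinuousLinearMap.sub_apply, ContinuousLinearMap.smul_apply,
      ContinuousLinearMap.one_apply, inner_sub_right, real_inner_smul_right, h1,
      real_inner_self_eq_norm_sq]
  rw [h2] at h0
  have h3 : ‖T x‖ ^ 2 ≤ d ^ 2 * ‖x‖ ^ 2 := by
    rw [← real_inner_self_eq_norm_sq]; linarith
  nlinarith [norm_nonneg (T x), norm_nonneg x, mul_nonneg hd (norm_nonneg x)]

open RealInnerProductSpace in
private lemma opNorm_inv_le {n : ℕ} {C : Matrix (Fin n) (Fin n) ℝ} (hC : C.PosDef)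
    {a : ℝ} (ha : 0 < a) (h : (C - a • 1).PosSemidef) :
    ‖Matrix.toEuclideanCLM (𝕜 := ℝ) (n := Fin n) C⁻¹‖ ≤ a⁻¹ := by
  refine ContinuousLinearMap.opNorm_le_bound _ (by positivity) fun x => ?_
  set y := Matrix.toEuclideanCLM (𝕜 := ℝ) (n := Fin n) C⁻¹ x with hy
  have hdet : IsUnit C.det := hC.det_pos.ne'.isUnit
  have hCy : Matrix.toEuclideanCLM (𝕜 := ℝ) (n := Fin n) C y = x := by
    rw [hy, ← ContinuousLinearMap.mul_apply, ← _root_.map_mul, Matrix.mul_nonsing_inv _ hdet,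
      _root_.map_one, ContinuousLinearMap.one_apply]
  have h0 := psd_inner_nonneg h y
  have hmap : Matrix.toEuclideanCLM (𝕜 := ℝ) (n := Fin n) (C - a • 1)
      = Matrix.toEuclideanCLM (𝕜 := ℝ) (n := Fin n) C - a • 1 := by
    rw [_root_.map_sub, _root_.map_smul, _root_.map_one]
  rw [hmap, ContinuousLinearMap.sub_apply, ContinuousLinearMap.smul_apply,
    ContinuousLinearMap.one_apply, inner_sub_right, real_inner_smul_right,
    real_inner_self_eq_norm_sq, hCy, sub_nonneg] at h0
  have h2 : ⟪y, x⟫ ≤ ‖y‖ * ‖x‖ := real_inner_le_norm y x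
  have h3 : a * ‖y‖ ^ 2 ≤ ‖y‖ * ‖x‖ := le_trans h0 h2
  rcases eq_or_lt_of_le (norm_nonneg y) with h4 | h4
  · rw [← h4]; positivity
  · have h5 : a * ‖y‖ ≤ ‖x‖ := by
      refine le_of_mul_le_mul_right ?_ h4
      calc a * ‖y‖ * ‖y‖ = a * ‖y‖ ^ 2 := by ring
        _ ≤ ‖y‖ * ‖x‖ := h3
        _ = ‖x‖ * ‖y‖ := by ring
    calc ‖y‖ = a⁻¹ * (a * ‖y‖) := by field_simp
      _ ≤ a⁻¹ * ‖x‖ := mul_le_mul_of_nonneg_left h5 (inv_nonneg.mpr ha.le)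

/-- For symmetric positive definite `A, B` with `α_L I ⪯ B ⪯ α_U I` and
`ᾱ = (α_L + α_U)/2`, the operator norm of `(A+B)⁻¹(A + ᾱI)` is at most `(1/2)(α_U/α_L + 1)`. -/
theorem stmt_6 {n : ℕ} (A B : Matrix (Fin n) (Fin n) ℝ)
    (hAsym : A.IsSymm) (hBsym : B.IsSymm) (hA : A.PosDef) (hB : B.PosDef)
    (αL αU : ℝ) (hαL : 0 < αL) (hαLU : αL ≤ αU)
    (hlow : (B - αL • (1 : Matrix (Fin n) (Fin n) ℝ)).PosSemidef)
    (hup : ((αU • (1 : Matrix (Fin n) (Fin n) ℝ)) - B).PosSemidef) :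
    ‖Matrix.toEuclideanCLM (𝕜 := ℝ) (n := Fin n) ((A + B)⁻¹ * (A + ((αL + αU) / 2) • 1))‖
      ≤ (1 / 2) * (αU / αL + 1) := by
  have hAB : (A + B).PosDef := hA.add hB
  have hdet : IsUnit (A + B).det := hAB.det_pos.ne'.isUnit
  set d : ℝ := (αU - αL) / 2 with hd
  set S : Matrix (Fin n) (Fin n) ℝ := ((αL + αU) / 2) • 1 - B with hSdef
  have hsplit : (A + B)⁻¹ * (A + ((αL + αU) / 2) • 1) = 1 + (A + B)⁻¹ * S := by
    have e1 : A + ((αL + αU) / 2) • (1 : Matrix (Fin n) (Fin n) ℝ) = (A + B) + S := by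
      rw [hSdef]; abel
    rw [e1, mul_add, Matrix.nonsing_inv_mul _ hdet]
  have hinv : ‖Matrix.toEuclideanCLM (𝕜 := ℝ) (n := Fin n) (A + B)⁻¹‖ ≤ αL⁻¹ := by
    refine opNorm_inv_le hAB hαL ?_
    have e2 : A + B - αL • (1 : Matrix (Fin n) (Fin n) ℝ) = A + (B - αL • 1) := by abel
    rw [e2]
    exact hA.posSemidef.add hlow
  have hSherm : S.IsHermitian := by
    rw [Matrix.IsHermitian, hSdef, Matrix.conjTranspose_sub, Matrix.conjTranspose_smul,
      Matrix.conjTranspose_one, hB.1.eq]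
    norm_num
  have hSnorm : ‖Matrix.toEuclideanCLM (𝕜 := ℝ) (n := Fin n) S‖ ≤ d := by
    refine opNorm_le_of_sq hSherm (by rw [hd]; linarith) ?_
    set C : Matrix (Fin n) (Fin n) ℝ := B - αL • 1 with hCdef
    have hCpsd : C.PosSemidef := hlow
    open scoped MatrixOrder in
    set R := CFC.sqrt C with hRdef
    open scoped MatrixOrder in
    have hRR : R * R = C := CFC.sqrt_mul_sqrt_self C hCpsd.nonneg
    open scoped MatrixOrder in
    have hRH : Rᴴ = R := (CFC.sqrt_nonneg C).posSemidef.1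
    have hBC : B = C + αL • 1 := by rw [hCdef]; abel
    have key : d ^ 2 • (1 : Matrix (Fin n) (Fin n) ℝ) - S * S
        = R * (αU • (1 : Matrix (Fin n) (Fin n) ℝ) - B) * Rᴴ := by
      have hSC : S = d • (1 : Matrix (Fin n) (Fin n) ℝ) - C := by
        rw [hSdef, hCdef, hd]; module
      have exp1 : R * (αU • (1 : Matrix (Fin n) (Fin n) ℝ) - B) * R
          = αU • (R * R) - (R * C * R + αL • (R * R)) := by
        rw [hBC]
        simp only [mul_sub, sub_mul, mul_add, add_mul, mul_smul_comm, smul_mul_assoc, mul_one]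
      have hRCR : R * C * R = C * C := by
        rw [← hRR]; noncomm_ring
      have expS : (d • (1 : Matrix (Fin n) (Fin n) ℝ) - C) * (d • 1 - C)
          = d ^ 2 • (1 : Matrix (Fin n) (Fin n) ℝ) - (2 * d) • C + C * C := by
        simp only [mul_sub, sub_mul, smul_mul_assoc, mul_smul_comm, mul_one, one_mul, smul_smul]
        module
      rw [hRH, exp1, hRR, hRCR, hSC, expS, hd]
      module
    rw [key]
    exact hup.mul_mul_conjTranspose_same R
  calc ‖Matrix.toEuclideanCLM (𝕜 := ℝ) (n := Fin n) ((A + B)⁻¹ * (A + ((αL + αU) / 2) • 1))‖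
      = ‖(1 : EuclideanSpace ℝ (Fin n) →L[ℝ] EuclideanSpace ℝ (Fin n))
          + Matrix.toEuclideanCLM (𝕜 := ℝ) (n := Fin n) (A + B)⁻¹
            * Matrix.toEuclideanCLM (𝕜 := ℝ) (n := Fin n) S‖ := by
        rw [hsplit, _root_.map_add, _root_.map_mul, _root_.map_one]
    _ ≤ ‖(1 : EuclideanSpace ℝ (Fin n) →L[ℝ] EuclideanSpace ℝ (Fin n))‖
          + ‖Matrix.toEuclideanCLM (𝕜 := ℝ) (n := Fin n) (A + B)⁻¹‖
            * ‖Matrix.toEuclideanCLM (𝕜 := ℝ) (n := Fin n) S‖ :=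
        (norm_add_le _ _).trans (by gcongr; exact norm_mul_le _ _)
    _ ≤ 1 + αL⁻¹ * d := by
        have hone : ‖(1 : EuclideanSpace ℝ (Fin n) →L[ℝ] EuclideanSpace ℝ (Fin n))‖ ≤ 1 := by
          rw [ContinuousLinearMap.one_def]; exact ContinuousLinearMap.norm_id_le
        have := mul_le_mul hinv hSnorm (norm_nonneg _) (inv_nonneg.mpr hαL.le)
        linarith
    _ = (1 / 2) * (αU / αL + 1) := by
        rw [hd]; field_simp; ring
end

section
/- Let A : H → ℝ^n be a bounded operator on a Hilbert space H, P a projection with range G⊥, R = A P, C = A (I−P), and suppose R R* ⪰ α_L I_n with α_L > 0 and the operator B = (I_G + C̃*(RR*)⁻¹C̃)⁻¹ exists on G (where C̃ = C restricted to G). Then for any η* ∈ G, ‖(R R* + C C*)⁻¹ C η*‖₂ ≤ (1/α_L) · ‖C‖_{G→ℓ₂} · ‖B η*‖, where ‖C‖_{G→ℓ₂} is the operator norm of C restricted to G. (Bound for the leave-one-out coefficient vector K⁻¹ A η* in terms of the bias.) -/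
set_option maxHeartbeats 1000000


open ContinuousLinearMap RealInnerProductSpace

/-- For `A : H → ℝⁿ`, `P` the orthogonal projection with range `G⊥`,
`R = AP`, `C = A(I-P)`, with `RR* ⪰ α_L I` (`α_L > 0`) and
`B = (I + C*(RR*)⁻¹C)⁻¹`, we have for any `η* ∈ G` the bound
`‖(RR* + CC*)⁻¹ C η*‖₂ ≤ (1/α_L)·‖C|_G‖·‖Bη*‖`. -/
theorem stmt_14 {n : ℕ} {H : Type*} [NormedAddCommGroup H] [InnerProductSpace ℝ H]
    [CompleteSpace H] (G : Submodule ℝ H) [CompleteSpace G]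
    (A : H →L[ℝ] EuclideanSpace ℝ (Fin n))
    (P : H →L[ℝ] H) (hP : P = (Gᗮ).subtypeL ∘L Submodule.orthogonalProjectionOnto Gᗮ)
    (C R : H →L[ℝ] EuclideanSpace ℝ (Fin n))
    (hR : R = A ∘L P) (hC : C = A ∘L (1 - P))
    (αL : ℝ) (hαL : 0 < αL)
    (hRRlow : ∀ x : EuclideanSpace ℝ (Fin n), αL * ‖x‖ ^ 2 ≤ ⟪(R ∘L R.adjoint) x, x⟫)
    (RRinv : EuclideanSpace ℝ (Fin n) →L[ℝ] EuclideanSpace ℝ (Fin n))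
    (hRR1 : (R ∘L R.adjoint) ∘L RRinv = 1) (hRR2 : RRinv ∘L (R ∘L R.adjoint) = 1)
    (Kinv : EuclideanSpace ℝ (Fin n) →L[ℝ] EuclideanSpace ℝ (Fin n))
    (hK1 : ((R ∘L R.adjoint) + (C ∘L C.adjoint)) ∘L Kinv = 1)
    (hK2 : Kinv ∘L ((R ∘L R.adjoint) + (C ∘L C.adjoint)) = 1)
    (B : H →L[ℝ] H)
    (hB1 : (1 + C.adjoint ∘L RRinv ∘L C) ∘L B = 1)
    (hB2 : B ∘L (1 + C.adjoint ∘L RRinv ∘L C) = 1)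
    (η : H) (hη : η ∈ G) :
    ‖Kinv (C η)‖ ≤ (1 / αL) * ‖C ∘L G.subtypeL‖ * ‖B η‖ := by
  -- Pointwise versions of the inverse identities
  have hRR1' : ∀ y, (R ∘L R.adjoint) (RRinv y) = y := by
    intro y
    have := ContinuousLinearMap.ext_iff.mp hRR1 y
    simpa using this
  have hK2' : ∀ y, Kinv ((R ∘L R.adjoint + C ∘L C.adjoint) y) = y := by
    intro y
    have := ContinuousLinearMap.ext_iff.mp hK2 y
    simpa using this
  have hB1' : ∀ x, B x + C.adjoint (RRinv (C (B x))) = x := by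
    intro x
    have := ContinuousLinearMap.ext_iff.mp hB1 x
    simpa using this
  -- Push-through identity: Kinv (C x) = RRinv (C (B x))
  have key : Kinv (C η) = RRinv (C (B η)) := by
    have e1 : C (B η) + (C ∘L C.adjoint) (RRinv (C (B η))) = C η := by
      have := congrArg C (hB1' η)
      simpa [map_add] using this
    have e2 : (R ∘L R.adjoint + C ∘L C.adjoint) (RRinv (C (B η))) = C η := by
      simp only [ContinuousLinearMap.add_apply]
      rw [hRR1']
      simpa using e1
    calc Kinv (C η) = Kinv ((R ∘L R.adjoint + C ∘L C.adjoint) (RRinv (C (B η)))) := by rw [e2]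
      _ = RRinv (C (B η)) := hK2' _
  -- Norm bound on RRinv
  have hRRnorm : ∀ y, ‖RRinv y‖ ≤ (1 / αL) * ‖y‖ := by
    intro y
    have h1 := hRRlow (RRinv y)
    rw [hRR1'] at h1
    have h2 : ⟪y, RRinv y⟫ ≤ ‖y‖ * ‖RRinv y‖ := real_inner_le_norm _ _
    rcases eq_or_lt_of_le (norm_nonneg (RRinv y)) with h0 | h0
    · rw [← h0]
      positivity
    · have h3 : αL * ‖RRinv y‖ ^ 2 ≤ ‖y‖ * ‖RRinv y‖ := h1.trans h2
      rw [pow_two, ← mul_assoc] at h3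
      have h4 : αL * ‖RRinv y‖ ≤ ‖y‖ := le_of_mul_le_mul_right h3 h0
      rw [div_mul_eq_mul_div, one_mul, le_div_iff₀ hαL, mul_comm]
      exact h4
  -- C factors through G
  have hCfac : ∀ z : H, ‖C z‖ ≤ ‖C ∘L G.subtypeL‖ * ‖z‖ := by
    intro z
    have hdec := (G.starProjection_add_starProjection_orthogonal z).symm
    have hCz : C z = (C ∘L G.subtypeL) (G.orthogonalProjectionOnto z) := by
      have hPz : P z = (Gᗮ.orthogonalProjectionOnto z : H) := by simp [hP]
      have hPg : P ((G.orthogonalProjectionOnto z : H)) = 0 := by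
        have : Gᗮ.orthogonalProjectionOnto ((G.orthogonalProjectionOnto z : H)) = 0 :=
          Submodule.orthogonalProjectionOnto_eq_zero_iff.mpr
            (Submodule.le_orthogonal_orthogonal G (G.orthogonalProjectionOnto z).2)
        rw [hP, ContinuousLinearMap.comp_apply, this, map_zero]
      simp only [hC, ContinuousLinearMap.comp_apply, ContinuousLinearMap.sub_apply,
        ContinuousLinearMap.one_apply, Submodule.subtypeL_apply, hPz, hPg, sub_zero]
      congr 1
      rw [sub_eq_iff_eq_add]
      exact hdec
    calc ‖C z‖ = ‖(C ∘L G.subtypeL) (G.orthogonalProjectionOnto z)‖ := by rw [hCz]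
      _ ≤ ‖C ∘L G.subtypeL‖ * ‖G.orthogonalProjectionOnto z‖ := le_opNorm _ _
      _ ≤ ‖C ∘L G.subtypeL‖ * ‖z‖ := by
          have h1 : ‖G.orthogonalProjectionOnto z‖ ≤ ‖z‖ := by
            have h2 := (G.orthogonalProjectionOnto).le_opNorm z
            have h3 := Submodule.orthogonalProjectionOnto_norm_le G
            nlinarith [norm_nonneg z]
          exact mul_le_mul_of_nonneg_left h1 (ContinuousLinearMap.opNorm_nonneg _)
  calc ‖Kinv (C η)‖ = ‖RRinv (C (B η))‖ := by rw [key]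
    _ ≤ (1 / αL) * ‖C (B η)‖ := hRRnorm _
    _ ≤ (1 / αL) * (‖C ∘L G.subtypeL‖ * ‖B η‖) :=
        mul_le_mul_of_nonneg_left (hCfac _) (by positivity)
    _ = (1 / αL) * ‖C ∘L G.subtypeL‖ * ‖B η‖ := by ring
end
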